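/- arXiv:math/0303249 — 6 statements merged into one kernel-verified Lean document; each statement's English description precedes it below -/
import Mathlib

section
/- For all coprime integers p and q, the complexity satisfies |p,q| = |q,p|. -/
/-!
On positive arguments the recursion is the subtractive Euclidean algorithm, which treats its
two arguments symmetrically. Signs only enter through one extra step when `p` and `q` have
opposite signs, i.e. `|p,q| = ||p|,|q|| + [p q < 0]`, and that condition is symmetric too.
-/

/-- The complexity `|p,q|` of a coprime pair of integers, defined recursively by
`|±1,0| = |0,±1| = |1,1| = 0`, `|p,q| = 1 + |p,q-p|` if `q > p > 0`,
`|p,q| = 1 + |p-q,q|` if `p > q > 0`, `|p,q| = |p,-q| + 1` if `p > 0 > q`, and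
`|p,q| = |-p,-q|` if `p < 0` and `q ≠ 0`. -/
def pqComplexity (p q : ℤ) : ℕ :=
  if h1 : p < 0 then
    if q = 0 then 0 else pqComplexity (-p) (-q)
  else if h2 : p = 0 then 0
  else
    if h3 : q < 0 then pqComplexity p (-q) + 1
    else if h4 : q = 0 then 0
    else
      if h5 : p < q then 1 + pqComplexity p (q - p)
      else if h6 : q < p then 1 + pqComplexity (p - q) q
      else 0
termination_by 3 * (p.natAbs + q.natAbs) + (if p < 0 then 2 else if q < 0 then 1 else 0)
decreasing_by
  all_goals (split_ifs <;> omega)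

lemma pqComplexity_zero_left (q : ℤ) : pqComplexity 0 q = 0 := by
  rw [pqComplexity]; simp

lemma pqComplexity_zero_right (p : ℤ) : pqComplexity p 0 = 0 := by
  rw [pqComplexity]; simp

lemma pqComplexity_of_neg_left {p q : ℤ} (hp : p < 0) (hq : q ≠ 0) :
    pqComplexity p q = pqComplexity (-p) (-q) := by
  rw [pqComplexity]; split_ifs; omega

lemma pqComplexity_of_pos_of_neg {p q : ℤ} (hp : 0 < p) (hq : q < 0) :
    pqComplexity p q = pqComplexity p (-q) + 1 := by
  rw [pqComplexity]; split_ifs <;> omega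

lemma pqComplexity_of_pos_of_lt {p q : ℤ} (hp : 0 < p) (h : p < q) :
    pqComplexity p q = 1 + pqComplexity p (q - p) := by
  rw [pqComplexity]; split_ifs <;> omega

lemma pqComplexity_of_pos_of_gt {p q : ℤ} (hq : 0 < q) (h : q < p) :
    pqComplexity p q = 1 + pqComplexity (p - q) q := by
  rw [pqComplexity]; split_ifs <;> omega

lemma pqComplexity_eq_abs (p q : ℤ) :
    pqComplexity p q = pqComplexity |p| |q| + if p * q < 0 then 1 else 0 := by
  rcases lt_trichotomy p 0 with hp | rfl | hp <;>
    rcases lt_trichotomy q 0 with hq | rfl | hq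
  · rw [pqComplexity_of_neg_left hp hq.ne, abs_of_neg hp, abs_of_neg hq,
      if_neg (by nlinarith), add_zero]
  · simp [pqComplexity_zero_right]
  · rw [pqComplexity_of_neg_left hp hq.ne',
      pqComplexity_of_pos_of_neg (neg_pos.2 hp) (neg_neg_of_pos hq), abs_of_neg hp,
      abs_of_pos hq, neg_neg, if_pos (mul_neg_of_neg_of_pos hp hq)]
  · simp [pqComplexity_zero_left]
  · simp [pqComplexity_zero_left]
  · simp [pqComplexity_zero_left]
  · rw [pqComplexity_of_pos_of_neg hp hq, abs_of_pos hp, abs_of_neg hq,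
      if_pos (mul_neg_of_pos_of_neg hp hq)]
  · simp [pqComplexity_zero_right]
  · rw [abs_of_pos hp, abs_of_pos hq, if_neg (mul_pos hp hq).not_gt, add_zero]

lemma pqComplexity_comm_of_nonneg {p q : ℤ} (hp : 0 ≤ p) (hq : 0 ≤ q) :
    pqComplexity p q = pqComplexity q p := by
  rcases hp.eq_or_lt with rfl | hp
  · rw [pqComplexity_zero_left, pqComplexity_zero_right]
  rcases hq.eq_or_lt with rfl | hq
  · rw [pqComplexity_zero_left, pqComplexity_zero_right]
  rcases lt_trichotomy p q with h | rfl | h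
  · rw [pqComplexity_of_pos_of_lt hp h, pqComplexity_of_pos_of_gt hp h,
      pqComplexity_comm_of_nonneg hp.le (sub_nonneg.2 h.le)]
  · rfl
  · rw [pqComplexity_of_pos_of_gt hq h, pqComplexity_of_pos_of_lt hq h,
      pqComplexity_comm_of_nonneg (sub_nonneg.2 h.le) hq.le]
termination_by (p + q).toNat
decreasing_by all_goals omega

theorem pqComplexity_comm_general (p q : ℤ) :
    pqComplexity p q = pqComplexity q p := by
  rw [pqComplexity_eq_abs p q, pqComplexity_eq_abs q p, mul_comm,
    pqComplexity_comm_of_nonneg (abs_nonneg p) (abs_nonneg q)]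

/-- For all coprime integers `p` and `q`, `|p,q| = |q,p|`. -/
theorem pqComplexity_comm (p q : ℤ) (h : Int.gcd p q = 1) :
    pqComplexity p q = pqComplexity q p :=
  pqComplexity_comm_general p q
end

section
/- If p and q are coprime integers with 0 < q < p, then |p, p−q| = |p, q|. -/
theorem pqComplexity_of_lt_left {a b : ℤ} (ha : 0 < a) (hab : a < b) :
    pqComplexity a b = 1 + pqComplexity a (b - a) := by
  rw [pqComplexity, dif_neg (by omega), dif_neg (by omega), dif_neg (by omega),
    dif_neg (by omega), dif_pos hab]

theorem pqComplexity_of_lt_right {a b : ℤ} (hb : 0 < b) (hba : b < a) :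
    pqComplexity a b = 1 + pqComplexity (a - b) b := by
  rw [pqComplexity, dif_neg (by omega), dif_neg (by omega), dif_neg (by omega),
    dif_neg (by omega), dif_neg (by omega), dif_pos hba]

/-- Both branches of the recursion subtract the smaller entry from the larger one, so swapping
the entries commutes with every step. -/
theorem pqComplexity_comm_s1 {a b : ℤ} (ha : 0 < a) (hb : 0 < b) :
    pqComplexity a b = pqComplexity b a := by
  rcases lt_trichotomy a b with hab | rfl | hba
  · rw [pqComplexity_of_lt_left ha hab, pqComplexity_of_lt_right ha hab,
      pqComplexity_comm_s1 ha (sub_pos.2 hab)]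
  · rfl
  · rw [pqComplexity_of_lt_right hb hba, pqComplexity_of_lt_left hb hba,
      pqComplexity_comm_s1 (sub_pos.2 hba) hb]
termination_by a.natAbs + b.natAbs

theorem pqComplexity_sub_general (p q : ℤ) (hq : 0 < q) (hqp : q < p) :
    pqComplexity p (p - q) = pqComplexity p q := by
  rw [pqComplexity_of_lt_right (sub_pos.2 hqp) (sub_lt_self p hq), sub_sub_cancel,
    pqComplexity_of_lt_right hq hqp, pqComplexity_comm_s1 hq (sub_pos.2 hqp)]

/-- If `p` and `q` are coprime integers with `0 < q < p`, then `|p, p-q| = |p,q|`. -/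
theorem pqComplexity_sub (p q : ℤ) (hq : 0 < q) (hqp : q < p) (h : Int.gcd p q = 1) :
    pqComplexity p (p - q) = pqComplexity p q :=
  pqComplexity_sub_general p q hq hqp
end

section
/- Every matrix A ∈ GL₂(ℤ) can be written as A = ε·S_{i₀}·J·S_{i₁}·J···S_{i_{n−1}}·J·S_{i_n}·S₁^m for some n ≥ 0, ε ∈ {+1, −1}, indices i₀, i_n ∈ {1,2,3} and i₁,…,i_{n−1} ∈ {1,2}, and m ∈ {0,1} (for n = 0 the expression reads A = ε·S_{i₀}·S₁^m). -/
/-- The matrix `S₁ = [[1,-1],[0,-1]]` as an element of `GL₂(ℤ)`. -/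
def S₁ : GL (Fin 2) ℤ := ⟨!![1, -1; 0, -1], !![1, -1; 0, -1], by decide, by decide⟩

/-- The matrix `S₂ = [[-1,0],[-1,1]]` as an element of `GL₂(ℤ)`. -/
def S₂ : GL (Fin 2) ℤ := ⟨!![-1, 0; -1, 1], !![-1, 0; -1, 1], by decide, by decide⟩

/-- The matrix `S₃ = [[0,1],[1,0]]` as an element of `GL₂(ℤ)`. -/
def S₃ : GL (Fin 2) ℤ := ⟨!![0, 1; 1, 0], !![0, 1; 1, 0], by decide, by decide⟩

/-- The matrix `J = [[-1,0],[0,1]]` as an element of `GL₂(ℤ)`. -/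
def Jmat : GL (Fin 2) ℤ := ⟨!![-1, 0; 0, 1], !![-1, 0; 0, 1], by decide, by decide⟩

/-- `SS k` is `Sₖ` for `k ∈ {1,2,3}` (junk value `1` otherwise). -/
def SS : ℕ → GL (Fin 2) ℤ
  | 1 => S₁
  | 2 => S₂
  | 3 => S₃
  | _ => 1

/-- `wordProd i n = S_{i 0} · J · S_{i 1} · J ⋯ S_{i (n-1)} · J · S_{i n}`,
the alternating word with `n` factors `J` and `n+1` factors `S`. -/
def wordProd (i : ℕ → ℕ) : ℕ → GL (Fin 2) ℤ
  | 0 => SS (i 0)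
  | n + 1 => wordProd i n * Jmat * SS (i (n + 1))

/-- auxiliary: `U` and its GL form -/
def Ug : GL (Fin 2) ℤ := ⟨!![1, 1; 0, 1], !![1, -1; 0, 1], by decide, by decide⟩
def Lg : GL (Fin 2) ℤ := ⟨!![1, 0; 1, 1], !![1, 0; -1, 1], by decide, by decide⟩

def TT (k : ℕ) : GL (Fin 2) ℤ := SS k * Jmat
def wp (l : List ℕ) : GL (Fin 2) ℤ := (l.map TT).prod
def Wg : GL (Fin 2) ℤ := S₂ * S₁
def Tg : GL (Fin 2) ℤ := SS 3 * Jmat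

lemma wp_nil : wp [] = 1 := rfl
lemma wp_cons (k : ℕ) (l : List ℕ) : wp (k :: l) = TT k * wp l := by
  simp [wp]

lemma hTT1 : TT 1 = -Ug := Units.ext (by decide)
lemma hTT2 : TT 2 = Lg := Units.ext (by decide)
lemma hUg : (Ug⁻¹).val = !![1, -1; 0, 1] := by decide
lemma hLg : (Lg⁻¹).val = !![1, 0; -1, 1] := by decide

lemma wordProd_succ (i : ℕ → ℕ) (n : ℕ) :
    wordProd i (n + 1) = wordProd i n * Jmat * SS (i (n + 1)) := rfl

lemma wordProd_shift (n : ℕ) (i : ℕ → ℕ) :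
    wordProd i (n + 1) = SS (i 0) * Jmat * wordProd (fun k => i (k + 1)) n := by
  induction n generalizing i with
  | zero => rfl
  | succ n ih =>
      rw [wordProd_succ, ih]
      rw [wordProd_succ]
      simp [mul_assoc]

lemma wordProd_of_list (l : List ℕ) (j : ℕ) (i : ℕ → ℕ)
    (hi : ∀ k, k < l.length → i k = l.getD k 0) (hj : i l.length = j) :
    wordProd i l.length = wp l * SS j := by
  induction l generalizing i with
  | nil => show SS (i 0) = wp [] * SS j; rw [show i 0 = j from hj]; rw [wp_nil, one_mul]
  | cons hd tl ih =>
      have : tl.length + 1 = (hd :: tl).length := rfl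
      rw [show (hd :: tl).length = tl.length + 1 from rfl, wordProd_shift]
      rw [ih (fun k => i (k + 1)) (fun k hk => by
            simpa using hi (k + 1) (by simpa using Nat.succ_lt_succ hk)) (by simpa using hj)]
      rw [hi 0 (by simp)]
      simp [wp_cons, TT, mul_assoc]

lemma tricho {a b c d : ℤ} (ha : 0 ≤ a) (hb : 0 ≤ b) (hc : 0 ≤ c) (hd : 0 ≤ d)
    (h : a * d - b * c = 1) :
    (a = 1 ∧ b = 0 ∧ c = 0 ∧ d = 1) ∨
    (c ≤ a ∧ d ≤ b ∧ 0 < c + d) ∨ (a ≤ c ∧ b ≤ d ∧ 0 < a + b) := by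
  rcases le_or_gt c a with h1 | h1 <;> rcases le_or_gt d b with h2 | h2
  · right; left; refine ⟨h1, h2, ?_⟩
    by_contra hcd; push_neg at hcd
    have hc0 : c = 0 := by omega
    have hd0 : d = 0 := by omega
    subst hc0; subst hd0; simp at h
  · rcases eq_or_lt_of_le h1 with rfl | h1'
    · right; right; exact ⟨le_refl _, h2.le, by nlinarith⟩
    · left
      have key : b + c ≤ 0 := by nlinarith
      have hb0 : b = 0 := by omega
      have hc0 : c = 0 := by omega
      subst hb0; subst hc0
      simp only [mul_zero, zero_mul, sub_zero] at h
      have := Int.eq_one_of_mul_eq_one_right ha h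
      exact ⟨this, rfl, rfl, by rw [this] at h; linarith⟩
  · exfalso; nlinarith
  · right; right; refine ⟨h1.le, h2.le, ?_⟩
    by_contra hab; push_neg at hab
    have ha0 : a = 0 := by omega
    have hb0 : b = 0 := by omega
    subst ha0; subst hb0; simp at h

/-- decomposition of nonnegative determinant-one matrices as words in U, L -/
lemma posdecomp : ∀ N : ℕ, ∀ P : GL (Fin 2) ℤ, ∀ a b c d : ℤ,
    (P : Matrix (Fin 2) (Fin 2) ℤ) = !![a, b; c, d] →
    0 ≤ a → 0 ≤ b → 0 ≤ c → 0 ≤ d → a * d - b * c = 1 → a + b + c + d ≤ (N : ℤ) →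
    ∃ l : List ℕ, (∀ x ∈ l, x = 1 ∨ x = 2) ∧ (P = wp l ∨ P = -wp l) := by
  intro N
  induction N with
  | zero =>
      intro P a b c d hP ha hb hc hd hdet hsum
      exfalso
      have ha0 : a = 0 := by omega
      have hb0 : b = 0 := by omega
      have hc0 : c = 0 := by omega
      have hd0 : d = 0 := by omega
      subst ha0; subst hb0; subst hc0; subst hd0; simp at hdet
  | succ N ih =>
      intro P a b c d hP ha hb hc hd hdet hsum
      rcases tricho ha hb hc hd hdet with ⟨ha1, hb0, hc0, hd1⟩ | ⟨h1, h2, h3⟩ | ⟨h1, h2, h3⟩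
      · -- identity
        refine ⟨[], by simp, Or.inl ?_⟩
        apply Units.ext
        rw [wp_nil, hP]
        subst ha1; subst hb0; subst hc0; subst hd1
        simp [Matrix.one_fin_two]
      · -- peel U
        have hP' : ((Ug⁻¹ * P : GL (Fin 2) ℤ) : Matrix (Fin 2) (Fin 2) ℤ)
            = !![a - c, b - d; c, d] := by
          rw [Units.val_mul, hUg, hP]
          rw [Matrix.mul_fin_two]
          ring_nf
        obtain ⟨l, hl, hPl⟩ := ih (Ug⁻¹ * P) (a - c) (b - d) c d hP'
          (by omega) (by omega) hc hd (by ring_nf; linarith [hdet]) (by push_cast at hsum ⊢; omega)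
        refine ⟨1 :: l, ?_, ?_⟩
        · intro x hx
          rcases List.mem_cons.mp hx with rfl | h
          · left; rfl
          · exact hl x h
        · have hPU : P = Ug * (Ug⁻¹ * P) := by rw [← mul_assoc, mul_inv_cancel, one_mul]
          rcases hPl with h | h
          · right
            rw [wp_cons, hTT1, hPU, h]
            simp [neg_mul, mul_neg]
          · left
            rw [wp_cons, hTT1, hPU, h]
            simp [neg_mul, mul_neg]
      · -- peel L
        have hP' : ((Lg⁻¹ * P : GL (Fin 2) ℤ) : Matrix (Fin 2) (Fin 2) ℤ)
            = !![a, b; c - a, d - b] := by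
          rw [Units.val_mul, hLg, hP]
          rw [Matrix.mul_fin_two]
          ring_nf
        obtain ⟨l, hl, hPl⟩ := ih (Lg⁻¹ * P) a b (c - a) (d - b) hP'
          ha hb (by omega) (by omega) (by ring_nf; linarith [hdet]) (by push_cast at hsum ⊢; omega)
        refine ⟨2 :: l, ?_, ?_⟩
        · intro x hx
          rcases List.mem_cons.mp hx with rfl | h
          · right; rfl
          · exact hl x h
        · have hPL : P = Lg * (Lg⁻¹ * P) := by rw [← mul_assoc, mul_inv_cancel, one_mul]
          rcases hPl with h | h
          · left
            rw [wp_cons, hTT2, hPL, h]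
          · right
            rw [wp_cons, hTT2, hPL, h]
            simp [mul_neg]

set_option maxHeartbeats 4000000 in
lemma quad (a b c d : ℤ) (h : a * d - b * c = 1) :
    (0 ≤ a * b ∧ 0 ≤ c * d) ∨ (b * (a + b) ≤ 0 ∧ d * (c + d) ≤ 0) ∨
    (a * (a + b) ≤ 0 ∧ c * (c + d) ≤ 0) := by
  rcases eq_or_ne a 0 with rfl | ha0
  · have h' : (-b) * c = 1 := by linear_combination h
    obtain ⟨hb1, hc1⟩ | ⟨hb1, hc1⟩ := Int.mul_eq_one_iff_eq_one_or_neg_one.mp h'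
    · have hb : b = -1 := by omega
      subst hb; subst hc1
      rcases lt_trichotomy d 0 with hd | rfl | hd <;>
        first
        | (left; constructor <;> nlinarith)
        | (right; left; constructor <;> nlinarith)
        | (right; right; constructor <;> nlinarith)
    · have hb : b = 1 := by omega
      have hc : c = -1 := by omega
      subst hb; subst hc
      rcases lt_trichotomy d 0 with hd | rfl | hd <;>
        first
        | (left; constructor <;> nlinarith)
        | (right; left; constructor <;> nlinarith)
        | (right; right; constructor <;> nlinarith)
  rcases eq_or_ne b 0 with rfl | hb0
  · have h' : a * d = 1 := by linear_combination h
    obtain ⟨ha1, hd1⟩ | ⟨ha1, hd1⟩ := Int.mul_eq_one_iff_eq_one_or_neg_one.mp h' <;>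
      subst ha1 <;> subst hd1 <;>
      rcases lt_trichotomy c 0 with hc | rfl | hc <;>
        first
        | (left; constructor <;> nlinarith)
        | (right; left; constructor <;> nlinarith)
        | (right; right; constructor <;> nlinarith)
  rcases eq_or_ne c 0 with rfl | hc0
  · have h' : a * d = 1 := by linear_combination h
    obtain ⟨ha1, hd1⟩ | ⟨ha1, hd1⟩ := Int.mul_eq_one_iff_eq_one_or_neg_one.mp h' <;>
      subst ha1 <;> subst hd1 <;>
      rcases lt_trichotomy b 0 with hb | rfl | hb <;>
        first
        | (left; constructor <;> nlinarith)
        | (right; left; constructor <;> nlinarith)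
        | (right; right; constructor <;> nlinarith)
  rcases eq_or_ne d 0 with rfl | hd0
  · have h' : (-b) * c = 1 := by linear_combination h
    obtain ⟨hb1, hc1⟩ | ⟨hb1, hc1⟩ := Int.mul_eq_one_iff_eq_one_or_neg_one.mp h'
    · have hb : b = -1 := by omega
      subst hb; subst hc1
      rcases lt_trichotomy a 0 with ha | rfl | ha <;>
        first
        | (left; constructor <;> nlinarith)
        | (right; left; constructor <;> nlinarith)
        | (right; right; constructor <;> nlinarith)
    · have hb : b = 1 := by omega
      have hc : c = -1 := by omega
      subst hb; subst hc
      rcases lt_trichotomy a 0 with ha | rfl | ha <;>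
        first
        | (left; constructor <;> nlinarith)
        | (right; left; constructor <;> nlinarith)
        | (right; right; constructor <;> nlinarith)
  -- all entries nonzero
  rcases ha0.lt_or_gt with ha | ha <;>
  rcases hb0.lt_or_gt with hb | hb <;>
  rcases hc0.lt_or_gt with hc | hc <;>
  rcases hd0.lt_or_gt with hd | hd <;>
  rcases lt_trichotomy (a + b) 0 with hs1 | hs1 | hs1 <;>
  rcases lt_trichotomy (c + d) 0 with hs2 | hs2 | hs2 <;>
    first
    | (left; constructor <;> nlinarith)
    | (right; left; constructor <;> nlinarith)
    | (right; right; constructor <;> nlinarith)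

lemma signpair {x y : ℤ} (h : 0 ≤ x * y) : (0 ≤ x ∧ 0 ≤ y) ∨ (x ≤ 0 ∧ y ≤ 0) := by
  rcases le_or_gt 0 x with hx | hx <;> rcases le_or_gt 0 y with hy | hy
  · exact Or.inl ⟨hx, hy⟩
  · right; exact ⟨by nlinarith, hy.le⟩
  · right; exact ⟨hx.le, by nlinarith⟩
  · exact Or.inr ⟨hx.le, hy.le⟩

def GoodList (l : List ℕ) : Prop :=
  (∀ k, 0 < k → k < l.length → (l.getD k 0 = 1 ∨ l.getD k 0 = 2)) ∧
  (l ≠ [] → (l.getD 0 0 = 1 ∨ l.getD 0 0 = 2 ∨ l.getD 0 0 = 3))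

lemma goodList_of_all12 {l : List ℕ} (h : ∀ x ∈ l, x = 1 ∨ x = 2) : GoodList l := by
  constructor
  · intro k hk hk'
    rw [List.getD_eq_getElem l 0 hk']
    exact h _ (List.getElem_mem hk')
  · intro hne
    have hl : 0 < l.length := List.length_pos_iff.mpr hne
    rw [List.getD_eq_getElem l 0 hl]
    rcases h _ (List.getElem_mem hl) with h' | h'
    · exact Or.inl h'
    · exact Or.inr (Or.inl h')

lemma goodList_cons3 {l : List ℕ} (h : ∀ x ∈ l, x = 1 ∨ x = 2) : GoodList (3 :: l) := by
  constructor
  · intro k hk hk'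
    match k, hk with
    | (k+1), _ =>
      have hk'' : k < l.length := by simpa using hk'
      have : (3 :: l).getD (k+1) 0 = l.getD k 0 := rfl
      rw [this, List.getD_eq_getElem l 0 hk'']
      exact h _ (List.getElem_mem hk'')
  · intro _; right; right; rfl

lemma hTg_val : (Tg : Matrix (Fin 2) (Fin 2) ℤ) = !![0, 1; -1, 0] := by decide
lemma hTg_inv : Tg⁻¹ = -Tg := Units.ext (by decide)
lemma hWW_val : ((Wg * Wg : GL (Fin 2) ℤ) : Matrix (Fin 2) (Fin 2) ℤ) = !![0, -1; 1, -1] := by decide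
lemma hWg_val : (Wg : Matrix (Fin 2) (Fin 2) ℤ) = !![-1, 1; -1, 0] := by decide
lemma hW3 : Wg * Wg * Wg = 1 := Units.ext (by decide)
lemma hS1S1 : S₁ * S₁ = 1 := Units.ext (by decide)
lemma hS3S1 : SS 3 * S₁ = Wg * Wg := Units.ext (by decide)

/-- sign/rotation normalization: every det-1 matrix in common-quadrant position is ±(word) -/
lemma main2 (B : GL (Fin 2) ℤ) (p q r s : ℤ)
    (hB : (B : Matrix (Fin 2) (Fin 2) ℤ) = !![p, q; r, s])
    (hdet : p * s - q * r = 1) (hpq : 0 ≤ p * q) (hrs : 0 ≤ r * s) :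
    ∃ l : List ℕ, GoodList l ∧ (B = wp l ∨ B = -wp l) := by
  rcases signpair hpq with ⟨hp, hq⟩ | ⟨hp, hq⟩ <;>
    rcases signpair hrs with ⟨hr, hs⟩ | ⟨hr, hs⟩
  · -- all nonneg
    obtain ⟨l, hl, h⟩ := posdecomp (p + q + r + s).toNat B p q r s hB hp hq hr hs hdet
      (Int.self_le_toNat _)
    exact ⟨l, goodList_of_all12 hl, h⟩
  · -- top row nonneg, bottom row nonpos : P = -(Tg * B)
    have hP : ((-(Tg * B) : GL (Fin 2) ℤ) : Matrix (Fin 2) (Fin 2) ℤ)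
        = !![-r, -s; p, q] := by
      rw [Units.val_neg, Units.val_mul, hTg_val, hB]
      rw [Matrix.mul_fin_two]
      norm_num
    obtain ⟨l, hl, h⟩ := posdecomp (-r + -s + p + q).toNat (-(Tg * B)) (-r) (-s) p q hP
      (by omega) (by omega) hp hq (by ring_nf; linarith) (Int.self_le_toNat _)
    have hBP : B = Tg * (-(Tg * B)) := by
      calc B = Tg⁻¹ * (Tg * B) := by rw [← mul_assoc, inv_mul_cancel, one_mul]
      _ = (-Tg) * (Tg * B) := by rw [hTg_inv]
      _ = Tg * (-(Tg * B)) := by rw [neg_mul, mul_neg]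
    refine ⟨3 :: l, goodList_cons3 hl, ?_⟩
    rcases h with h | h
    · left; rw [wp_cons, hBP, h]; rfl
    · right; rw [wp_cons, hBP, h, mul_neg]; rfl
  · -- top row nonpos, bottom row nonneg : P = Tg * B
    have hP : ((Tg * B : GL (Fin 2) ℤ) : Matrix (Fin 2) (Fin 2) ℤ)
        = !![r, s; -p, -q] := by
      rw [Units.val_mul, hTg_val, hB]
      rw [Matrix.mul_fin_two]
      norm_num
    obtain ⟨l, hl, h⟩ := posdecomp (r + s + -p + -q).toNat (Tg * B) r s (-p) (-q) hP
      hr hs (by omega) (by omega) (by ring_nf; linarith) (Int.self_le_toNat _)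
    have hBP : B = -(Tg * (Tg * B)) := by
      calc B = Tg⁻¹ * (Tg * B) := by rw [← mul_assoc, inv_mul_cancel, one_mul]
      _ = (-Tg) * (Tg * B) := by rw [hTg_inv]
      _ = -(Tg * (Tg * B)) := by rw [neg_mul]
    refine ⟨3 :: l, goodList_cons3 hl, ?_⟩
    rcases h with h | h
    · right; rw [wp_cons, hBP, h]; rfl
    · left; rw [wp_cons, hBP, h, mul_neg, neg_neg]; rfl
  · -- all nonpos : P = -B
    have hP : ((-B : GL (Fin 2) ℤ) : Matrix (Fin 2) (Fin 2) ℤ) = !![-p, -q; -r, -s] := by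
      rw [Units.val_neg, hB]
      ext i j
      fin_cases i <;> fin_cases j <;> simp
    obtain ⟨l, hl, h⟩ := posdecomp (-p + -q + -r + -s).toNat (-B) (-p) (-q) (-r) (-s) hP
      (by omega) (by omega) (by omega) (by omega) (by ring_nf; linarith) (Int.self_le_toNat _)
    refine ⟨l, goodList_of_all12 hl, ?_⟩
    rcases h with h | h
    · right; rw [← h, neg_neg]
    · left; rw [← neg_neg B, h, neg_neg]

lemma hWgSS : Wg = SS 2 * S₁ := rfl

/-- every determinant-1 element is ± (word) * SS j * S₁^m -/
lemma main1 (A : GL (Fin 2) ℤ) (a b c d : ℤ)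
    (hA : (A : Matrix (Fin 2) (Fin 2) ℤ) = !![a, b; c, d]) (hdet : a * d - b * c = 1) :
    ∃ (l : List ℕ) (j m : ℕ), GoodList l ∧ (j = 1 ∨ j = 2 ∨ j = 3) ∧ m ≤ 1 ∧
      (A = wp l * SS j * S₁ ^ m ∨ A = -(wp l * SS j * S₁ ^ m)) := by
  rcases quad a b c d hdet with ⟨h1, h2⟩ | ⟨h1, h2⟩ | ⟨h1, h2⟩
  · obtain ⟨l, hg, h⟩ := main2 A a b c d hA hdet h1 h2
    refine ⟨l, 1, 1, hg, Or.inl rfl, le_refl _, ?_⟩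
    have he : wp l * SS 1 * S₁ ^ 1 = wp l := by
      rw [pow_one, mul_assoc]
      rw [show SS 1 = S₁ from rfl, hS1S1, mul_one]
    rw [he]
    exact h
  · -- pair (w,u) : B = A * Wg * Wg
    have hBv : ((A * Wg * Wg : GL (Fin 2) ℤ) : Matrix (Fin 2) (Fin 2) ℤ)
        = !![b, -a-b; d, -c-d] := by
      rw [mul_assoc, Units.val_mul, hWW_val, hA, Matrix.mul_fin_two]
      norm_num
      constructor <;> ring
    obtain ⟨l, hg, h⟩ := main2 (A * Wg * Wg) b (-a-b) d (-c-d) hBv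
      (by ring_nf; linarith) (by nlinarith) (by nlinarith)
    refine ⟨l, 2, 1, hg, Or.inr (Or.inl rfl), le_refl _, ?_⟩
    have hAB : A = (A * Wg * Wg) * Wg := by
      rw [mul_assoc, mul_assoc, ← mul_assoc Wg, hW3, mul_one]
    have he : SS 2 * S₁ ^ 1 = Wg := by rw [pow_one]; rfl
    rcases h with h | h
    · left; rw [mul_assoc, he, hAB, h]
    · right; rw [mul_assoc, he, hAB, h, neg_mul]
  · -- pair (u,v) : B = A * Wg
    have hBv : ((A * Wg : GL (Fin 2) ℤ) : Matrix (Fin 2) (Fin 2) ℤ)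
        = !![-a-b, a; -c-d, c] := by
      rw [Units.val_mul, hWg_val, hA, Matrix.mul_fin_two]
      norm_num
      constructor <;> ring
    obtain ⟨l, hg, h⟩ := main2 (A * Wg) (-a-b) a (-c-d) c hBv
      (by ring_nf; linarith) (by nlinarith) (by nlinarith)
    refine ⟨l, 3, 1, hg, Or.inr (Or.inr rfl), le_refl _, ?_⟩
    have hAB : A = (A * Wg) * (Wg * Wg) := by
      rw [mul_assoc, ← mul_assoc Wg, hW3, mul_one]
    have he : SS 3 * S₁ ^ 1 = Wg * Wg := by rw [pow_one]; exact hS3S1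
    rcases h with h | h
    · left; rw [mul_assoc, he, hAB, h]
    · right; rw [mul_assoc, he, hAB, h, neg_mul]

/-- bridge to the wordProd form -/
lemma toRep (A : GL (Fin 2) ℤ) (l : List ℕ) (j m : ℕ)
    (hg : GoodList l) (hj : j = 1 ∨ j = 2 ∨ j = 3) (hm : m ≤ 1)
    (hA : A = wp l * SS j * S₁ ^ m ∨ A = -(wp l * SS j * S₁ ^ m)) :
    ∃ (n : ℕ) (ε : GL (Fin 2) ℤ) (i : ℕ → ℕ) (m : ℕ),
      (ε = 1 ∨ ε = -1) ∧
      (i 0 = 1 ∨ i 0 = 2 ∨ i 0 = 3) ∧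
      (i n = 1 ∨ i n = 2 ∨ i n = 3) ∧
      (∀ k, 0 < k → k < n → i k = 1 ∨ i k = 2) ∧
      m ≤ 1 ∧
      A = ε * wordProd i n * S₁ ^ m := by
  set i : ℕ → ℕ := fun k => if k < l.length then l.getD k 0 else j with hidef
  have hwp : wordProd i l.length = wp l * SS j := by
    apply wordProd_of_list
    · intro k hk; simp [hidef, hk]
    · simp [hidef]
  have hi0 : i 0 = 1 ∨ i 0 = 2 ∨ i 0 = 3 := by
    rcases Nat.eq_zero_or_pos l.length with h0 | h0
    · have : i 0 = j := by simp [hidef, h0]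
      rw [this]; exact hj
    · have : i 0 = l.getD 0 0 := by simp [hidef, h0]
      rw [this]
      exact hg.2 (List.length_pos_iff.mp h0)
  have hin : i l.length = j := by simp [hidef]
  have hint : ∀ k, 0 < k → k < l.length → i k = 1 ∨ i k = 2 := by
    intro k hk hk'
    have : i k = l.getD k 0 := by simp [hidef, hk']
    rw [this]
    exact hg.1 k hk hk'
  rcases hA with h | h
  · exact ⟨l.length, 1, i, m, Or.inl rfl, hi0, hin ▸ hj, hint, hm, by
      rw [one_mul, hwp, h]⟩
  · exact ⟨l.length, -1, i, m, Or.inr rfl, hi0, hin ▸ hj, hint, hm, by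
      rw [hwp, h, neg_one_mul, neg_mul]⟩

/-- Every `A ∈ GL₂(ℤ)` can be written as
`A = ε · S_{i₀} · J · S_{i₁} · J ⋯ S_{i_{n-1}} · J · S_{i_n} · S₁^m` with `n ≥ 0`,
`ε ∈ {1, -1}`, `i₀, i_n ∈ {1,2,3}`, `i₁, …, i_{n-1} ∈ {1,2}`, and `m ∈ {0,1}`. -/
theorem matrix_decomposition_exists (A : GL (Fin 2) ℤ) :
    ∃ (n : ℕ) (ε : GL (Fin 2) ℤ) (i : ℕ → ℕ) (m : ℕ),
      (ε = 1 ∨ ε = -1) ∧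
      (i 0 = 1 ∨ i 0 = 2 ∨ i 0 = 3) ∧
      (i n = 1 ∨ i n = 2 ∨ i n = 3) ∧
      (∀ k, 0 < k → k < n → i k = 1 ∨ i k = 2) ∧
      m ≤ 1 ∧
      A = ε * wordProd i n * S₁ ^ m := by
  set a := A.val 0 0
  set b := A.val 0 1
  set c := A.val 1 0
  set d := A.val 1 1
  have hA : (A : Matrix (Fin 2) (Fin 2) ℤ) = !![a, b; c, d] := by
    exact (Matrix.etaExpand_eq A.val).symm ▸ rfl
  have hu : IsUnit (A.val.det) := by
    apply IsUnit.of_mul_eq_one (Matrix.det A.inv)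
    rw [← Matrix.det_mul, A.val_inv, Matrix.det_one]
  have hdet2 : a * d - b * c = 1 ∨ a * d - b * c = -1 := by
    have h2 : A.val.det = a * d - b * c := by rw [Matrix.det_fin_two]
    rcases Int.isUnit_iff.mp hu with h | h <;> rw [h2] at h
    · exact Or.inl h
    · exact Or.inr h
  rcases hdet2 with hdet | hdet
  · obtain ⟨l, j, m, hg, hj, hm, h⟩ := main1 A a b c d hA hdet
    exact toRep A l j m hg hj hm h
  · -- determinant -1 : apply main1 to A * S₁
    have hBv : ((A * S₁ : GL (Fin 2) ℤ) : Matrix (Fin 2) (Fin 2) ℤ)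
        = !![a, -a-b; c, -c-d] := by
      rw [Units.val_mul, hA, show (S₁ : Matrix (Fin 2) (Fin 2) ℤ) = !![1,-1;0,-1] from rfl,
        Matrix.mul_fin_two]
      norm_num
      constructor <;> ring
    obtain ⟨l, j, m, hg, hj, hm, h⟩ := main1 (A * S₁) a (-a-b) c (-c-d) hBv
      (by ring_nf; linarith)
    have hAS : A = (A * S₁) * S₁ := by rw [mul_assoc, hS1S1, mul_one]
    interval_cases m
    · -- m = 0 : A = ± wp l * SS j * S₁^1
      apply toRep A l j 1 hg hj (le_refl 1)
      rcases h with h | h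
      · left; rw [hAS, h, pow_zero, pow_one, mul_one]
      · right; rw [hAS, h, pow_zero, pow_one, mul_one, neg_mul]
    · -- m = 1 : A = ± wp l * SS j * S₁^0
      apply toRep A l j 0 hg hj (by norm_num)
      rcases h with h | h
      · left
        rw [hAS, h, pow_one, pow_zero, mul_one, mul_assoc, mul_assoc, hS1S1, mul_one]
      · right
        rw [hAS, h, pow_one, pow_zero, mul_one, neg_mul, mul_assoc, mul_assoc, hS1S1, mul_one]
end

section
/- For every A ∈ GL₂(ℤ), one has ‖A⁻¹‖ = ‖A‖. -/
/-- The norm `|A|` of `A ∈ GL₂(ℤ)`: the number `n` of factors `J` in the (unique)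
expression `A = ε · S_{i₀} · J · S_{i₁} · J ⋯ S_{i_{n-1}} · J · S_{i_n} · S₁^m` with
`ε ∈ {1,-1}`, `i₀, i_n ∈ {1,2,3}`, `i₁, …, i_{n-1} ∈ {1,2}`, `m ∈ {0,1}`. -/
noncomputable def matNorm (A : GL (Fin 2) ℤ) : ℕ :=
  sInf {n | ∃ (ε : GL (Fin 2) ℤ) (i : ℕ → ℕ) (m : ℕ),
    (ε = 1 ∨ ε = -1) ∧
    (i 0 = 1 ∨ i 0 = 2 ∨ i 0 = 3) ∧
    (i n = 1 ∨ i n = 2 ∨ i n = 3) ∧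
    (∀ k, 0 < k → k < n → i k = 1 ∨ i k = 2) ∧
    m ≤ 1 ∧
    A = ε * wordProd i n * S₁ ^ m}

/-- The conjugacy norm `‖A‖`: the minimum of `|B·A·B⁻¹|` over all `B ∈ GL₂(ℤ)`. -/
noncomputable def matNormConj (A : GL (Fin 2) ℤ) : ℕ :=
  sInf {k | ∃ B : GL (Fin 2) ℤ, matNorm (B * A * B⁻¹) = k}

namespace NFAux

open Matrix

abbrev G2 := GL (Fin 2) ℤ

/-! ### Basic involutions -/

lemma S1_sq : S₁ * S₁ = 1 := Units.ext (by decide)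
lemma S2_sq : S₂ * S₂ = 1 := Units.ext (by decide)
lemma S3_sq : S₃ * S₃ = 1 := Units.ext (by decide)
lemma J_sq : Jmat * Jmat = 1 := Units.ext (by decide)

lemma S1_inv : S₁⁻¹ = S₁ := inv_eq_of_mul_eq_one_right S1_sq
lemma J_inv : Jmat⁻¹ = Jmat := inv_eq_of_mul_eq_one_right J_sq

lemma SS_sq {t : ℕ} (h : t = 1 ∨ t = 2 ∨ t = 3) : SS t * SS t = 1 := by
  rcases h with rfl | rfl | rfl
  · exact S1_sq
  · exact S2_sq
  · exact S3_sq

lemma SS_inv {t : ℕ} (h : t = 1 ∨ t = 2 ∨ t = 3) : (SS t)⁻¹ = SS t :=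
  inv_eq_of_mul_eq_one_right (SS_sq h)

/-! ### wordProd lemmas -/

lemma wordProd_congr (i i' : ℕ → ℕ) (n : ℕ) (h : ∀ k ≤ n, i k = i' k) :
    wordProd i n = wordProd i' n := by
  induction n with
  | zero =>
    show SS (i 0) = SS (i' 0)
    rw [h 0 le_rfl]
  | succ n ih =>
    show wordProd i n * Jmat * SS (i (n + 1)) = wordProd i' n * Jmat * SS (i' (n + 1))
    rw [ih fun k hk => h k (le_trans hk (Nat.le_succ n)), h (n + 1) le_rfl]

lemma wordProd_cons (a : ℕ) (i : ℕ → ℕ) (n : ℕ) :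
    wordProd (fun k => Nat.casesOn k a i) (n + 1) = SS a * Jmat * wordProd i n := by
  induction n with
  | zero => rfl
  | succ n ih =>
    show wordProd (fun k => Nat.casesOn k a i) (n + 1) * Jmat * SS (i (n + 1)) = _
    rw [ih]
    show _ = SS a * Jmat * (wordProd i n * Jmat * SS (i (n + 1)))
    simp [mul_assoc]

lemma wordProd_inv (i : ℕ → ℕ) (n : ℕ) (h : ∀ k ≤ n, i k = 1 ∨ i k = 2 ∨ i k = 3) :
    (wordProd i n)⁻¹ = wordProd (fun k => i (n - k)) n := by
  induction n generalizing i with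
  | zero =>
    show (SS (i 0))⁻¹ = SS (i 0)
    exact SS_inv (h 0 le_rfl)
  | succ n ih =>
    have e1 : (wordProd i (n + 1))⁻¹ = SS (i (n + 1)) * Jmat * (wordProd i n)⁻¹ := by
      show (wordProd i n * Jmat * SS (i (n + 1)))⁻¹ = _
      rw [_root_.mul_inv_rev, _root_.mul_inv_rev, SS_inv (h (n + 1) le_rfl), J_inv, mul_assoc]
    rw [e1, ih i fun k hk => h k (le_trans hk (Nat.le_succ n)), ← wordProd_cons]
    refine wordProd_congr _ _ _ fun k hk => ?_
    cases k with
    | zero => simp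
    | succ j =>
      show i (n - j) = i (n + 1 - (j + 1))
      congr 1
      omega

/-! ### Matrix-level generators -/

def pqm (t : ℕ) : Matrix (Fin 2) (Fin 2) ℤ := if t = 1 then !![1, -1; 0, 1] else !![1, 0; -1, 1]

def dm : Matrix (Fin 2) (Fin 2) ℤ := !![0, 1; -1, 0]

def Pgl : G2 := ⟨!![1, -1; 0, 1], !![1, 1; 0, 1], by decide, by decide⟩
def Qgl : G2 := ⟨!![1, 0; -1, 1], !![1, 0; 1, 1], by decide, by decide⟩
def Dgl : G2 := ⟨!![0, 1; -1, 0], !![0, -1; 1, 0], by decide, by decide⟩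

def PQgl (t : ℕ) : G2 := if t = 1 then Pgl else Qgl

lemma PQgl_val (t : ℕ) : (PQgl t).val = pqm t := by
  unfold PQgl pqm
  split <;> rfl

lemma Dgl_val : (Dgl).val = dm := rfl

def jsl (t : ℕ) : G2 := Jmat * SS t

lemma Pgl_eq : Pgl = -(jsl 1) := Units.ext (by decide)
lemma Qgl_eq : Qgl = jsl 2 := Units.ext (by decide)
lemma Dgl_inv_eq : Dgl⁻¹ = jsl 3 := Units.ext (by decide)

/-! ### The monoid lemma (Euclid) -/

lemma antineg_list (N : ℕ) : ∀ x y z w : ℤ, (x - y - z + w).toNat ≤ N →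
    0 ≤ x → y ≤ 0 → z ≤ 0 → 0 ≤ w → x * w - y * z = 1 →
    ∃ c : List ℕ, (∀ t ∈ c, t = 1 ∨ t = 2) ∧ !![x, y; z, w] = (c.map pqm).prod := by
  induction N with
  | zero =>
    intro x y z w hm hx hy hz hw hdet
    have hx0 : x = 0 := by omega
    have hy0 : y = 0 := by omega
    subst hx0; subst hy0
    simp at hdet
  | succ N ih =>
    intro x y z w hm hx hy hz hw hdet
    by_cases hid : x = 1 ∧ y = 0 ∧ z = 0 ∧ w = 1
    · obtain ⟨rfl, rfl, rfl, rfl⟩ := hid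
      exact ⟨[], by simp, by simp [Matrix.one_fin_two]⟩
    · by_cases hP : 0 ≤ x + z ∧ y + w ≤ 0
      · have hne : ¬(z = 0 ∧ w = 0) := by
          rintro ⟨rfl, rfl⟩
          simp at hdet
        obtain ⟨c, hc, hprod⟩ := ih (x + z) (y + w) z w (by omega) hP.1 hP.2 hz hw
          (by linear_combination hdet)
        refine ⟨1 :: c, ?_, ?_⟩
        · intro t ht
          rcases List.mem_cons.mp ht with rfl | ht
          · exact Or.inl rfl
          · exact hc t ht
        · rw [List.map_cons, List.prod_cons, ← hprod]
          ext i j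
          fin_cases i <;> fin_cases j <;>
            simp [pqm, Matrix.mul_apply, Fin.sum_univ_two] <;> ring
      · by_cases hQ : x + z ≤ 0 ∧ 0 ≤ y + w
        · have hne : ¬(x = 0 ∧ y = 0) := by
            rintro ⟨rfl, rfl⟩
            simp at hdet
          obtain ⟨hQ1, hQ2⟩ := hQ
          obtain ⟨c, hc, hprod⟩ := ih x y (z + x) (w + y) (by omega) hx hy (by omega) (by omega)
            (by linear_combination hdet)
          refine ⟨2 :: c, ?_, ?_⟩
          · intro t ht
            rcases List.mem_cons.mp ht with rfl | ht
            · exact Or.inr rfl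
            · exact hc t ht
          · rw [List.map_cons, List.prod_cons, ← hprod]
            ext i j
            fin_cases i <;> fin_cases j <;>
              simp [pqm, Matrix.mul_apply, Fin.sum_univ_two] <;> ring
        · exfalso
          have h1 : x + z ≤ -1 ∨ 1 ≤ y + w := by omega
          have h2 : 1 ≤ x + z ∨ y + w ≤ -1 := by omega
          rcases h1 with h1 | h1 <;> rcases h2 with h2 | h2
          · -- x+z ≤ -1 and 1 ≤ x+z : impossible... careful: h2 alternatives
            -- here h2 : 1 ≤ x + z
            omega
          · -- x+z ≤ -1, y+w ≤ -1
            have k1 : (w + 1) * (x + 1) ≤ (-y) * (-z) :=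
              mul_le_mul (by omega) (by omega) (by omega) (by omega)
            nlinarith [k1, hdet]
          · -- 1 ≤ y+w, 1 ≤ x+z : forces identity
            have k1 : (-y) * (-z) ≤ (w - 1) * (x - 1) :=
              mul_le_mul (by omega) (by omega) (by omega) (by omega)
            have hxw : x + w ≤ 2 := by nlinarith [k1, hdet]
            have hx1 : x = 1 := by omega
            have hw1 : w = 1 := by omega
            have hy0 : y = 0 := by omega
            have hz0 : z = 0 := by omega
            exact hid ⟨hx1, hy0, hz0, hw1⟩
          · omega

/-! ### The covering lemma for sign normalization -/

def KDis (p q r s : ℤ) : Prop :=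
  (0 ≤ r ∧ s ≤ 0 ∧ r ≤ p ∧ q ≤ s) ∨
  (r ≤ 0 ∧ 0 ≤ s ∧ p ≤ r ∧ s ≤ q) ∨
  (p ≤ 0 ∧ 0 ≤ q ∧ r ≤ p ∧ q ≤ s) ∨
  (0 ≤ p ∧ q ≤ 0 ∧ p ≤ r ∧ s ≤ q) ∨
  (p ≤ 0 ∧ 0 ≤ q ∧ 0 ≤ r ∧ s ≤ 0) ∨
  (0 ≤ p ∧ q ≤ 0 ∧ r ≤ 0 ∧ 0 ≤ s) ∨
  (s ≤ 0 ∧ r ≤ 0 ∧ q ≤ s ∧ p ≤ r) ∨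
  (0 ≤ s ∧ 0 ≤ r ∧ s ≤ q ∧ r ≤ p) ∨
  (0 ≤ q ∧ 0 ≤ p ∧ q ≤ s ∧ p ≤ r) ∨
  (q ≤ 0 ∧ p ≤ 0 ∧ s ≤ q ∧ r ≤ p) ∨
  (0 ≤ p ∧ 0 ≤ q ∧ r ≤ 0 ∧ s ≤ 0) ∨
  (p ≤ 0 ∧ q ≤ 0 ∧ 0 ≤ r ∧ 0 ≤ s)

lemma covCore (p q r s : ℤ) (hp : 1 ≤ p) (hq : 0 ≤ q) (hdet : p * s - q * r = -1) :
    KDis p q r s := by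
  unfold KDis
  rcases le_or_gt 1 s with hs | hs
  · rcases le_or_gt r 0 with hr | hr
    · exfalso
      nlinarith
    · by_cases h1 : s ≤ q ∧ r ≤ p
      · omega
      · by_cases h2 : q ≤ s ∧ p ≤ r
        · omega
        · have h1' : q + 1 ≤ s ∨ p + 1 ≤ r := by omega
          have h2' : s + 1 ≤ q ∨ r + 1 ≤ p := by omega
          exfalso
          rcases h1' with h1' | h1' <;> rcases h2' with h2' | h2'
          · omega
          · have k1 : q * r ≤ (s - 1) * (p - 1) :=
              mul_le_mul (by omega) (by omega) (by omega) (by omega)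
            nlinarith [k1, hdet]
          · have k1 : (s + 1) * (p + 1) ≤ q * r :=
              mul_le_mul (by omega) (by omega) (by omega) (by omega)
            nlinarith [k1, hdet]
          · omega
  · by_cases hs0 : s = 0
    · subst hs0
      have hqr : q * r = 1 := by linear_combination -hdet
      have hq1 : q = 1 := by
        rcases Int.mul_eq_one_iff_eq_one_or_neg_one.mp hqr with ⟨h, _⟩ | ⟨h, _⟩ <;> omega
      have hr1 : r = 1 := by
        rcases Int.mul_eq_one_iff_eq_one_or_neg_one.mp hqr with ⟨_, h⟩ | ⟨h, _⟩ <;> omega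
      omega
    · have hs' : s ≤ -1 := by omega
      rcases le_or_gt r 0 with hr | hr
      · omega
      · have e1 : q * r = p * s + 1 := by linear_combination -hdet
        have h1 : 0 ≤ q * r := mul_nonneg hq (by omega)
        have e2 : p * s ≤ p * (-1) := mul_le_mul_of_nonneg_left hs' (by omega)
        have hp1 : p = 1 := by nlinarith [h1, e1, e2]
        subst hp1
        have hs1 : s = -1 := by nlinarith [h1, e1]
        subst hs1
        have e3 : q * r = 0 := by linarith [e1]
        have hq0 : q = 0 := by
          rcases mul_eq_zero.mp e3 with h | h <;> omega
        omega

set_option maxHeartbeats 1600000 in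
lemma cov (p q r s : ℤ) (hdet : p * s - q * r = -1) : KDis p q r s := by
  by_cases h1 : 1 ≤ p ∧ 0 ≤ q
  · exact covCore p q r s h1.1 h1.2 hdet
  by_cases h2 : p ≤ 0 ∧ 1 ≤ q
  · have := covCore q (-p) s (-r) (by omega) (by omega) (by linear_combination hdet)
    unfold KDis at this ⊢
    rcases this with h|h|h|h|h|h|h|h|h|h|h|h <;>
      first
      | exact Or.inl (by omega)
      | exact Or.inr (Or.inl (by omega))
      | exact Or.inr (Or.inr (Or.inl (by omega)))
      | exact Or.inr (Or.inr (Or.inr (Or.inl (by omega))))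
      | exact Or.inr (Or.inr (Or.inr (Or.inr (Or.inl (by omega)))))
      | exact Or.inr (Or.inr (Or.inr (Or.inr (Or.inr (Or.inl (by omega))))))
      | exact Or.inr (Or.inr (Or.inr (Or.inr (Or.inr (Or.inr (Or.inl (by omega)))))))
      | exact Or.inr (Or.inr (Or.inr (Or.inr (Or.inr (Or.inr (Or.inr (Or.inl (by omega))))))))
      | exact Or.inr (Or.inr (Or.inr (Or.inr (Or.inr (Or.inr (Or.inr (Or.inr (Or.inl (by omega)))))))))
      | exact Or.inr (Or.inr (Or.inr (Or.inr (Or.inr (Or.inr (Or.inr (Or.inr (Or.inr (Or.inl (by omega))))))))))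
      | exact Or.inr (Or.inr (Or.inr (Or.inr (Or.inr (Or.inr (Or.inr (Or.inr (Or.inr (Or.inr (Or.inl (by omega)))))))))))
      | exact Or.inr (Or.inr (Or.inr (Or.inr (Or.inr (Or.inr (Or.inr (Or.inr (Or.inr (Or.inr (Or.inr (by omega)))))))))))
  by_cases h3 : p ≤ -1 ∧ q ≤ 0
  · have := covCore (-p) (-q) (-r) (-s) (by omega) (by omega) (by linear_combination hdet)
    unfold KDis at this ⊢
    rcases this with h|h|h|h|h|h|h|h|h|h|h|h <;>
      first
      | exact Or.inl (by omega)
      | exact Or.inr (Or.inl (by omega))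
      | exact Or.inr (Or.inr (Or.inl (by omega)))
      | exact Or.inr (Or.inr (Or.inr (Or.inl (by omega))))
      | exact Or.inr (Or.inr (Or.inr (Or.inr (Or.inl (by omega)))))
      | exact Or.inr (Or.inr (Or.inr (Or.inr (Or.inr (Or.inl (by omega))))))
      | exact Or.inr (Or.inr (Or.inr (Or.inr (Or.inr (Or.inr (Or.inl (by omega)))))))
      | exact Or.inr (Or.inr (Or.inr (Or.inr (Or.inr (Or.inr (Or.inr (Or.inl (by omega))))))))
      | exact Or.inr (Or.inr (Or.inr (Or.inr (Or.inr (Or.inr (Or.inr (Or.inr (Or.inl (by omega)))))))))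
      | exact Or.inr (Or.inr (Or.inr (Or.inr (Or.inr (Or.inr (Or.inr (Or.inr (Or.inr (Or.inl (by omega))))))))))
      | exact Or.inr (Or.inr (Or.inr (Or.inr (Or.inr (Or.inr (Or.inr (Or.inr (Or.inr (Or.inr (Or.inl (by omega)))))))))))
      | exact Or.inr (Or.inr (Or.inr (Or.inr (Or.inr (Or.inr (Or.inr (Or.inr (Or.inr (Or.inr (Or.inr (by omega)))))))))))
  by_cases h4 : 0 ≤ p ∧ q ≤ -1
  · have := covCore (-q) p (-s) r (by omega) (by omega) (by linear_combination hdet)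
    unfold KDis at this ⊢
    rcases this with h|h|h|h|h|h|h|h|h|h|h|h <;>
      first
      | exact Or.inl (by omega)
      | exact Or.inr (Or.inl (by omega))
      | exact Or.inr (Or.inr (Or.inl (by omega)))
      | exact Or.inr (Or.inr (Or.inr (Or.inl (by omega))))
      | exact Or.inr (Or.inr (Or.inr (Or.inr (Or.inl (by omega)))))
      | exact Or.inr (Or.inr (Or.inr (Or.inr (Or.inr (Or.inl (by omega))))))
      | exact Or.inr (Or.inr (Or.inr (Or.inr (Or.inr (Or.inr (Or.inl (by omega)))))))
      | exact Or.inr (Or.inr (Or.inr (Or.inr (Or.inr (Or.inr (Or.inr (Or.inl (by omega))))))))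
      | exact Or.inr (Or.inr (Or.inr (Or.inr (Or.inr (Or.inr (Or.inr (Or.inr (Or.inl (by omega)))))))))
      | exact Or.inr (Or.inr (Or.inr (Or.inr (Or.inr (Or.inr (Or.inr (Or.inr (Or.inr (Or.inl (by omega))))))))))
      | exact Or.inr (Or.inr (Or.inr (Or.inr (Or.inr (Or.inr (Or.inr (Or.inr (Or.inr (Or.inr (Or.inl (by omega)))))))))))
      | exact Or.inr (Or.inr (Or.inr (Or.inr (Or.inr (Or.inr (Or.inr (Or.inr (Or.inr (Or.inr (Or.inr (by omega)))))))))))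
  · exfalso
    have hp0 : p = 0 := by omega
    have hq0 : q = 0 := by omega
    subst hp0; subst hq0
    simp at hdet

/-! ### Choice of sign normalization -/

def antiNegP (B : Matrix (Fin 2) (Fin 2) ℤ) : Prop :=
  0 ≤ B 0 0 ∧ B 0 1 ≤ 0 ∧ B 1 0 ≤ 0 ∧ 0 ≤ B 1 1

lemma choice (C : Matrix (Fin 2) (Fin 2) ℤ) (hdet : C.det = -1) :
    ∃ (e : ℤ) (a δ : ℕ), (e = 1 ∨ e = -1) ∧ (a = 1 ∨ a = 2 ∨ a = 3) ∧ δ ≤ 1 ∧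
      antiNegP (e • ((SS a).val * C * dm ^ δ)) := by
  have hC : C = !![C 0 0, C 0 1; C 1 0, C 1 1] := Matrix.eta_fin_two C
  set p := C 0 0
  set q := C 0 1
  set r := C 1 0
  set s := C 1 1
  have hdet' : p * s - q * r = -1 := by
    rw [Matrix.det_fin_two] at hdet
    linarith [hdet]
  have hcov := cov p q r s hdet'
  unfold KDis at hcov
  rcases hcov with h | h | h | h | h | h | h | h | h | h | h | h
  · exact ⟨1, 1, 0, Or.inl rfl, Or.inl rfl, by norm_num,
      by rw [hC]; unfold antiNegP; norm_num [SS, S₁, dm, Matrix.mul_fin_two]; omega⟩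
  · exact ⟨-1, 1, 0, Or.inr rfl, Or.inl rfl, by norm_num,
      by rw [hC]; unfold antiNegP; norm_num [SS, S₁, dm, Matrix.mul_fin_two]; omega⟩
  · exact ⟨1, 2, 0, Or.inl rfl, Or.inr (Or.inl rfl), by norm_num,
      by rw [hC]; unfold antiNegP; norm_num [SS, S₂, dm, Matrix.mul_fin_two]; omega⟩
  · exact ⟨-1, 2, 0, Or.inr rfl, Or.inr (Or.inl rfl), by norm_num,
      by rw [hC]; unfold antiNegP; norm_num [SS, S₂, dm, Matrix.mul_fin_two]; omega⟩
  · exact ⟨1, 3, 0, Or.inl rfl, Or.inr (Or.inr rfl), by norm_num,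
      by rw [hC]; unfold antiNegP; norm_num [SS, S₃, dm, Matrix.mul_fin_two]; omega⟩
  · exact ⟨-1, 3, 0, Or.inr rfl, Or.inr (Or.inr rfl), by norm_num,
      by rw [hC]; unfold antiNegP; norm_num [SS, S₃, dm, Matrix.mul_fin_two]; omega⟩
  · exact ⟨1, 1, 1, Or.inl rfl, Or.inl rfl, by norm_num,
      by rw [hC]; unfold antiNegP; norm_num [SS, S₁, dm, Matrix.mul_fin_two]; omega⟩
  · exact ⟨-1, 1, 1, Or.inr rfl, Or.inl rfl, by norm_num,
      by rw [hC]; unfold antiNegP; norm_num [SS, S₁, dm, Matrix.mul_fin_two]; omega⟩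
  · exact ⟨1, 2, 1, Or.inl rfl, Or.inr (Or.inl rfl), by norm_num,
      by rw [hC]; unfold antiNegP; norm_num [SS, S₂, dm, Matrix.mul_fin_two]; omega⟩
  · exact ⟨-1, 2, 1, Or.inr rfl, Or.inr (Or.inl rfl), by norm_num,
      by rw [hC]; unfold antiNegP; norm_num [SS, S₂, dm, Matrix.mul_fin_two]; omega⟩
  · exact ⟨1, 3, 1, Or.inl rfl, Or.inr (Or.inr rfl), by norm_num,
      by rw [hC]; unfold antiNegP; norm_num [SS, S₃, dm, Matrix.mul_fin_two]; omega⟩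
  · exact ⟨-1, 3, 1, Or.inr rfl, Or.inr (Or.inr rfl), by norm_num,
      by rw [hC]; unfold antiNegP; norm_num [SS, S₃, dm, Matrix.mul_fin_two]; omega⟩


/-! ### Lifting products to GL -/

def glPQprod (c : List ℕ) : G2 := (c.map PQgl).prod

lemma glPQprod_val (c : List ℕ) : (glPQprod c).val = (c.map pqm).prod := by
  induction c with
  | nil => simp [glPQprod]
  | cons t c ih =>
    simp only [glPQprod, List.map_cons, List.prod_cons, Units.val_mul, PQgl_val]
    rw [← ih]
    rfl

lemma pq_sign (c : List ℕ) (hc : ∀ t ∈ c, t = 1 ∨ t = 2) :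
    ∃ u : G2, (u = 1 ∨ u = -1) ∧ glPQprod c = u * (c.map jsl).prod := by
  induction c with
  | nil => exact ⟨1, Or.inl rfl, by simp [glPQprod]⟩
  | cons t c ih =>
    obtain ⟨u, hu, hcprod⟩ := ih fun x hx => hc x (List.mem_cons_of_mem _ hx)
    have ht := hc t List.mem_cons_self
    have hstep : glPQprod (t :: c) = PQgl t * glPQprod c := by
      simp [glPQprod]
    rcases ht with rfl | rfl
    · refine ⟨-u, ?_, ?_⟩
      · rcases hu with rfl | rfl
        · exact Or.inr rfl
        · exact Or.inl (neg_neg 1)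
      · rw [hstep, hcprod, List.map_cons, List.prod_cons,
          show PQgl 1 = -(jsl 1) from Pgl_eq]
        rcases hu with rfl | rfl <;>
          simp [neg_mul, mul_neg, mul_assoc]
    · refine ⟨u, hu, ?_⟩
      rw [hstep, hcprod, List.map_cons, List.prod_cons,
        show PQgl 2 = jsl 2 from Qgl_eq]
      rcases hu with rfl | rfl <;>
        simp [neg_mul, mul_neg, mul_assoc]

/-! ### getD helpers -/

lemma getD_concat_len (l : List ℕ) (x d : ℕ) : (l ++ [x]).getD l.length d = x := by
  induction l with
  | nil => rfl
  | cons a l ih => simpa using ih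

lemma getD_append_lt (l l' : List ℕ) (k d : ℕ) (h : k < l.length) :
    (l ++ l').getD k d = l.getD k d := by
  induction l generalizing k with
  | nil => simp at h
  | cons a l ih =>
    cases k with
    | zero => rfl
    | succ k =>
      simp only [List.cons_append, List.getD_cons_succ]
      exact ih k (by simpa using h)

lemma getD_mem_of_lt (l : List ℕ) (k d : ℕ) (h : k < l.length) : l.getD k d ∈ l := by
  induction l generalizing k with
  | nil => simp at h
  | cons a l ih =>
    cases k with
    | zero => simp
    | succ k =>
      simp only [List.getD_cons_succ]
      exact List.mem_cons_of_mem _ (ih k (by simpa using h))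

/-! ### glWord -/

def glWord (a : ℕ) (L : List ℕ) : G2 := SS a * (L.map jsl).prod

lemma glWord_eq (a : ℕ) (L : List ℕ) :
    glWord a L = wordProd (fun k => (a :: L).getD k 0) L.length := by
  induction L using List.reverseRecOn with
  | nil => simp [glWord, wordProd]
  | append_singleton M x ih =>
    have h1 : glWord a (M ++ [x]) = glWord a M * (Jmat * SS x) := by
      simp [glWord, jsl, mul_assoc]
    have hL : (M ++ [x]).length = M.length + 1 := by simp
    rw [h1, ih, hL]
    have e0 : wordProd (fun k => (a :: (M ++ [x])).getD k 0) (M.length + 1)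
        = wordProd (fun k => (a :: (M ++ [x])).getD k 0) M.length * Jmat *
          SS ((a :: (M ++ [x])).getD (M.length + 1) 0) := rfl
    have e2 : (a :: (M ++ [x])).getD (M.length + 1) 0 = x := by
      have hx : (a :: (M ++ [x])) = (a :: M) ++ [x] := by simp
      rw [hx, show M.length + 1 = (a :: M).length from rfl]
      exact getD_concat_len _ _ _
    have e3 : wordProd (fun k => (a :: (M ++ [x])).getD k 0) M.length
        = wordProd (fun k => (a :: M).getD k 0) M.length := by
      apply wordProd_congr
      intro k hk
      show (a :: (M ++ [x])).getD k 0 = (a :: M).getD k 0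
      have hx : (a :: (M ++ [x])) = (a :: M) ++ [x] := by simp
      rw [hx]
      exact getD_append_lt _ _ _ _ (by simp; omega)
    rw [e0, e2, e3, mul_assoc]

/-! ### Misc sign helpers -/

lemma S1pow_sq {m : ℕ} (hm : m ≤ 1) : S₁ ^ m * S₁ ^ m = 1 := by
  have : m = 0 ∨ m = 1 := by omega
  rcases this with rfl | rfl
  · simp
  · simpa using S1_sq

lemma S1pow_inv {m : ℕ} (hm : m ≤ 1) : (S₁ ^ m)⁻¹ = S₁ ^ m :=
  inv_eq_of_mul_eq_one_right (S1pow_sq hm)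

lemma sign_pull (σ τ : G2) (hσ : σ = 1 ∨ σ = -1) (hτ : τ = 1 ∨ τ = -1) (X Y : G2) :
    X * (σ * (τ * Y)) = (σ * τ) * (X * Y) := by
  rcases hσ with rfl | rfl <;> rcases hτ with rfl | rfl <;>
    simp [neg_mul, mul_neg]

/-! ### The norm set -/

def NSet (A : G2) : Set ℕ :=
  {n | ∃ (ε : G2) (i : ℕ → ℕ) (m : ℕ),
    (ε = 1 ∨ ε = -1) ∧
    (i 0 = 1 ∨ i 0 = 2 ∨ i 0 = 3) ∧
    (i n = 1 ∨ i n = 2 ∨ i n = 3) ∧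
    (∀ k, 0 < k → k < n → i k = 1 ∨ i k = 2) ∧
    m ≤ 1 ∧
    A = ε * wordProd i n * S₁ ^ m}

lemma matNorm_eq (A : G2) : matNorm A = sInf (NSet A) := rfl

lemma mem_NSet_word (A : G2) (ε : G2) (hε : ε = 1 ∨ ε = -1) (a : ℕ)
    (ha : a = 1 ∨ a = 2 ∨ a = 3) (L : List ℕ) (m : ℕ) (hm : m ≤ 1)
    (hmidL : ∀ j, j + 1 < L.length → (L.getD j 0 = 1 ∨ L.getD j 0 = 2))
    (hlastL : ∀ j, j + 1 = L.length → (L.getD j 0 = 1 ∨ L.getD j 0 = 2 ∨ L.getD j 0 = 3))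
    (hA : A = ε * glWord a L * S₁ ^ m) :
    L.length ∈ NSet A := by
  refine ⟨ε, fun k => (a :: L).getD k 0, m, hε, by simpa using ha, ?_, ?_, hm, ?_⟩
  · cases L with
    | nil => simpa using ha
    | cons b Lt =>
      simp only [List.length_cons, List.getD_cons_succ]
      exact hlastL Lt.length (by simp)
  · intro k hk1 hk2
    cases k with
    | zero => omega
    | succ j =>
      simp only [List.getD_cons_succ]
      exact hmidL j (by omega)
  · rw [hA, glWord_eq]

/-! ### Reversal -/

lemma rev_mem {A : G2} {n : ℕ} (h : n ∈ NSet A) : ∃ C : G2, n ∈ NSet (C * A⁻¹ * C⁻¹) := by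
  obtain ⟨ε, i, m, hε, h0, hn, hmid, hm, hA⟩ := h
  have hall : ∀ k ≤ n, i k = 1 ∨ i k = 2 ∨ i k = 3 := by
    intro k hk
    rcases eq_or_ne k 0 with rfl | hk0
    · exact h0
    rcases eq_or_ne k n with rfl | hkn
    · exact hn
    rcases hmid k (by omega) (by omega) with h' | h'
    · exact Or.inl h'
    · exact Or.inr (Or.inl h')
  have hWinv := wordProd_inv i n hall
  have hεinv : ε⁻¹ = ε := by
    rcases hε with rfl | rfl
    · exact inv_one
    · simp
  have hεc : ∀ X : G2, ε * X = X * ε := by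
    intro X
    rcases hε with rfl | rfl
    · simp
    · rw [neg_one_mul, mul_neg_one]
  refine ⟨S₁ ^ m, ε, fun k => i (n - k), m, hε, by simpa using hn, by simpa using h0, ?_, hm, ?_⟩
  · intro k hk1 hk2
    exact hmid (n - k) (by omega) (by omega)
  · rw [hA, _root_.mul_inv_rev, _root_.mul_inv_rev, hWinv, hεinv, S1pow_inv hm]
    simp only [← mul_assoc]
    rw [S1pow_sq hm, one_mul, ← hεc]

/-! ### Existence of a normal form -/

lemma NSet_nonempty (A : G2) : (NSet A).Nonempty := by
  classical
  have hdA : A.val.det = 1 ∨ A.val.det = -1 :=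
    Int.isUnit_iff.mp ((Matrix.isUnit_iff_isUnit_det _).mp A.isUnit)
  set m : ℕ := if A.val.det = -1 then 0 else 1 with hmdef
  have hm1 : m ≤ 1 := by rw [hmdef]; split <;> norm_num
  have hdetS1 : (S₁.val : Matrix (Fin 2) (Fin 2) ℤ).det = -1 := by
    show (!![1, -1; 0, -1] : Matrix (Fin 2) (Fin 2) ℤ).det = -1
    simp [Matrix.det_fin_two_of]
  have hCval : ((A * S₁ ^ m).val : Matrix (Fin 2) (Fin 2) ℤ) = A.val * S₁.val ^ m := by
    simp [Units.val_mul, Units.val_pow_eq_pow_val]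
  have hdetC : (A * S₁ ^ m).val.det = -1 := by
    rw [hCval, Matrix.det_mul, Matrix.det_pow, hdetS1]
    rcases hdA with h | h
    · have hm' : m = 1 := by rw [hmdef, if_neg (by rw [h]; norm_num)]
      rw [hm', h]; norm_num
    · have hm' : m = 0 := by rw [hmdef, if_pos h]
      rw [hm', h]; norm_num
  obtain ⟨e, a, δ, he, ha, hδ, hAN⟩ := choice (A * S₁ ^ m).val hdetC
  set M : Matrix (Fin 2) (Fin 2) ℤ := e • ((SS a).val * (A * S₁ ^ m).val * dm ^ δ) with hMdef
  obtain ⟨hx, hy, hz, hw⟩ := hAN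
  have hdetSSa : (SS a).val.det = -1 := by
    rcases ha with rfl | rfl | rfl <;>
      simp [SS, S₁, S₂, S₃, Matrix.det_fin_two_of]
  have hdetdm : (dm : Matrix (Fin 2) (Fin 2) ℤ).det = 1 := by
    simp [dm, Matrix.det_fin_two_of]
  have hdetM : M.det = 1 := by
    rw [hMdef, Matrix.det_smul, Matrix.det_mul, Matrix.det_mul, Matrix.det_pow,
      hdetSSa, hdetC, hdetdm]
    rcases he with rfl | rfl <;> simp [Fintype.card_fin]
  have hdetM' : M 0 0 * M 1 1 - M 0 1 * M 1 0 = 1 := by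
    rw [← Matrix.det_fin_two]
    exact hdetM
  obtain ⟨c, hc, hcprod⟩ := antineg_list ((M 0 0 - M 0 1 - M 1 0 + M 1 1).toNat)
    (M 0 0) (M 0 1) (M 1 0) (M 1 1) le_rfl hx hy hz hw hdetM'
  have hMprod : M = (c.map pqm).prod := by
    calc M = !![M 0 0, M 0 1; M 1 0, M 1 1] := Matrix.eta_fin_two M
      _ = (c.map pqm).prod := hcprod
  set Egl : G2 := if e = 1 then 1 else -1 with hEdef
  have hEval : (Egl).val = e • (1 : Matrix (Fin 2) (Fin 2) ℤ) := by
    rcases he with rfl | rfl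
    · rw [hEdef, if_pos rfl]; simp
    · rw [hEdef, if_neg (by norm_num)]; simp
  have hEor : Egl = 1 ∨ Egl = -1 := by
    rcases he with rfl | rfl
    · exact Or.inl (by rw [hEdef, if_pos rfl])
    · exact Or.inr (by rw [hEdef, if_neg (by norm_num)])
  have hE2 : Egl * Egl = 1 := by
    rcases hEor with h | h <;> rw [h] <;> simp
  have hBval : (Egl * (SS a * (A * S₁ ^ m) * Dgl ^ δ)).val = M := by
    rw [hMdef]
    simp only [Units.val_mul, Units.val_pow_eq_pow_val, Dgl_val, hEval,
      smul_mul_assoc, one_mul]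
  have hBeq : Egl * (SS a * (A * S₁ ^ m) * Dgl ^ δ) = glPQprod c :=
    Units.ext (by rw [hBval, hMprod, glPQprod_val])
  have e1 : SS a * (A * S₁ ^ m) * Dgl ^ δ = Egl * glPQprod c := by
    have h' := congrArg (Egl * ·) hBeq
    rwa [← mul_assoc, hE2, one_mul] at h'
  have e2 : A * S₁ ^ m = SS a * (Egl * glPQprod c) * (Dgl ^ δ)⁻¹ := by
    rw [← e1]
    simp only [← mul_assoc]
    rw [SS_sq ha, one_mul, mul_inv_cancel_right]
  have e3 : A = SS a * (Egl * glPQprod c) * (Dgl ^ δ)⁻¹ * S₁ ^ m := by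
    calc A = A * S₁ ^ m * (S₁ ^ m)⁻¹ := by rw [mul_inv_cancel_right]
      _ = SS a * (Egl * glPQprod c) * (Dgl ^ δ)⁻¹ * (S₁ ^ m)⁻¹ := by rw [e2]
      _ = _ := by rw [S1pow_inv hm1]
  obtain ⟨u, hu, huprod⟩ := pq_sign c hc
  have e4 : A = (Egl * u) * (SS a * (c.map jsl).prod) * (Dgl ^ δ)⁻¹ * S₁ ^ m := by
    rw [e3, huprod, sign_pull Egl u hEor hu]
  have hεor : Egl * u = 1 ∨ Egl * u = -1 := by
    rcases hEor with h | h <;> rcases hu with h' | h' <;> rw [h, h'] <;> simp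
  have hδ01 : δ = 0 ∨ δ = 1 := by omega
  rcases hδ01 with rfl | rfl
  · -- δ = 0
    refine ⟨c.length, mem_NSet_word A (Egl * u) hεor a ha c m hm1 ?_ ?_ ?_⟩
    · intro j hj
      rcases hc _ (getD_mem_of_lt c j 0 (by omega)) with h' | h'
      · exact Or.inl h'
      · exact Or.inr h'
    · intro j hj
      rcases hc _ (getD_mem_of_lt c j 0 (by omega)) with h' | h'
      · exact Or.inl h'
      · exact Or.inr (Or.inl h')
    · rw [e4]
      simp [glWord]
  · -- δ = 1
    refine ⟨(c ++ [3]).length, mem_NSet_word A (Egl * u) hεor a ha (c ++ [3]) m hm1 ?_ ?_ ?_⟩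
    · intro j hj
      have hjlt : j < c.length := by simpa using hj
      rw [getD_append_lt _ _ _ _ hjlt]
      exact hc _ (getD_mem_of_lt c j 0 hjlt)
    · intro j hj
      have hj' : j = c.length := by simpa using hj
      subst hj'
      rw [getD_concat_len]
      exact Or.inr (Or.inr rfl)
    · rw [e4, pow_one, Dgl_inv_eq]
      have : glWord a (c ++ [3]) = SS a * ((c.map jsl).prod * jsl 3) := by
        simp [glWord]
      rw [this]
      simp only [mul_assoc]

/-! ### Conclusion -/

def CSet (A : G2) : Set ℕ := {k | ∃ B : G2, matNorm (B * A * B⁻¹) = k}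

lemma matNormConj_eq (A : G2) : matNormConj A = sInf (CSet A) := rfl

lemma CSet_nonempty (A : G2) : (CSet A).Nonempty :=
  ⟨matNorm A, 1, by simp⟩

lemma conj_le (A : G2) : matNormConj A⁻¹ ≤ matNormConj A := by
  obtain ⟨B, hB⟩ := Nat.sInf_mem (CSet_nonempty A)
  set X := B * A * B⁻¹ with hX
  have hmemX : matNorm X ∈ NSet X := by
    rw [matNorm_eq]
    exact Nat.sInf_mem (NSet_nonempty X)
  obtain ⟨C, hC⟩ := rev_mem hmemX
  have h1 : matNorm (C * X⁻¹ * C⁻¹) ≤ matNorm X := by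
    rw [matNorm_eq]
    exact Nat.sInf_le hC
  have h2 : C * X⁻¹ * C⁻¹ = (C * B) * A⁻¹ * (C * B)⁻¹ := by
    rw [hX]
    group
  calc matNormConj A⁻¹ ≤ matNorm ((C * B) * A⁻¹ * (C * B)⁻¹) := Nat.sInf_le ⟨C * B, rfl⟩
    _ = matNorm (C * X⁻¹ * C⁻¹) := by rw [h2]
    _ ≤ matNorm X := h1
    _ = matNormConj A := hB

end NFAux

/-- For every `A ∈ GL₂(ℤ)`, one has `‖A⁻¹‖ = ‖A‖`. -/
theorem matNormConj_inv (A : GL (Fin 2) ℤ) : matNormConj A⁻¹ = matNormConj A := by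
  refine le_antisymm (NFAux.conj_le A) ?_
  have := NFAux.conj_le A⁻¹
  rwa [inv_inv] at this
end

section
/- The subgroup of GL₂(ℤ) generated by −I, S₁, S₂, S₃ is isomorphic to (ℤ/2ℤ) × 𝔖₃: there is an injective group homomorphism from (ℤ/2ℤ) × 𝔖₃ (where 𝔖₃ is the symmetric group on {0,1,2}) into GL₂(ℤ) sending the generator of ℤ/2ℤ to −I and sending the transpositions (0 1), (1 2), (0 2) to S₁, S₂, S₃ respectively, whose image is exactly the subgroup generated by {−I, S₁, S₂, S₃}. -/
/-!
The vectors `v₀ = (0,1)`, `v₁ = (-1,-1)`, `v₂ = (1,0)` sum to zero and any two of them form a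
basis of `ℤ²`, so `𝔖₃` acts faithfully on `ℤ²` by permuting them, the transpositions `(0 1)`,
`(1 2)`, `(0 2)` acting by `S₁`, `S₂`, `S₃`. As the transpositions generate `𝔖₃`, the image is
generated by `S₁, S₂, S₃`. The scalar `-I` is central and not in that image (it would send `v₀` to
`-v₀`), so `(a, σ) ↦ (-I)^a σ` embeds `ℤ/2ℤ × 𝔖₃`, with image generated by `-I, S₁, S₂, S₃`.
-/

open scoped Matrix

theorem MonoidHom.range_eq_closure_image {G N : Type*} [Group G] [Group N] (f : G →* N)
    {s : Set G} (hs : Subgroup.closure s = ⊤) : f.range = Subgroup.closure (f '' s) := by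
  rw [f.range_eq_map, ← hs, MonoidHom.map_closure]

namespace ZModTwo

open Multiplicative

theorem eq_one_or_eq_ofAdd_one (a : Multiplicative (ZMod 2)) : a = 1 ∨ a = ofAdd 1 := by
  revert a; decide

theorem closure_ofAdd_one : Subgroup.closure {ofAdd (1 : ZMod 2)} = ⊤ :=
  (Subgroup.eq_top_iff' _).2 fun a => (eq_one_or_eq_ofAdd_one a).elim
    (fun h => h ▸ Subgroup.one_mem _) (fun h => h ▸ Subgroup.subset_closure rfl)

variable (R : Type*) [Ring R]

@[simps]
def signHom : Multiplicative (ZMod 2) →* Rˣ where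
  toFun a := if a = 1 then 1 else -1
  map_one' := if_pos rfl
  map_mul' a b := by
    rcases eq_one_or_eq_ofAdd_one a with rfl | rfl <;>
      rcases eq_one_or_eq_ofAdd_one b with rfl | rfl <;>
      simp [← ofAdd_add, show (1 : ZMod 2) + 1 = 0 from rfl]

theorem signHom_ofAdd_one : signHom R (ofAdd (1 : ZMod 2)) = -1 := by
  rw [signHom_apply, if_neg (by decide)]

theorem commute_signHom (a : Multiplicative (ZMod 2)) (u : Rˣ) : Commute (signHom R a) u := by
  rcases eq_one_or_eq_ofAdd_one a with rfl | rfl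
  · rw [map_one]; exact Commute.one_left u
  · rw [signHom_ofAdd_one]; exact Commute.neg_one_left u

theorem signHom_injective (h : (-1 : R) ≠ 1) : Function.Injective (signHom R) := by
  refine (injective_iff_map_eq_one _).2 fun a ha => ?_
  rcases eq_one_or_eq_ofAdd_one a with rfl | rfl
  · rfl
  · rw [signHom_ofAdd_one] at ha
    exact absurd (congrArg Units.val ha) h

theorem range_signHom : (signHom R).range = Subgroup.closure {-1} := by
  rw [(signHom R).range_eq_closure_image closure_ofAdd_one, Set.image_singleton,
    signHom_ofAdd_one]

end ZModTwo

def triangleVec : Fin 3 → Fin 2 → ℤ := ![![0, 1], ![-1, -1], ![1, 0]]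

/-- The standard basis of `ℤ²` is `(v₂, v₀)`, so the columns of the matrix of `σ` are
`v_{σ 2}, v_{σ 0}`. -/
def permMatrix (σ : Equiv.Perm (Fin 3)) : Matrix (Fin 2) (Fin 2) ℤ :=
  Matrix.of fun i j => triangleVec (σ (![2, 0] j)) i

def permMatrixHom : Equiv.Perm (Fin 3) →* Matrix (Fin 2) (Fin 2) ℤ where
  toFun := permMatrix
  map_one' := by decide
  map_mul' := by decide

def permRep : Equiv.Perm (Fin 3) →* GL (Fin 2) ℤ := permMatrixHom.toHomUnits

theorem permRep_mulVec_triangleVec (σ : Equiv.Perm (Fin 3)) (k : Fin 3) :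
    (permRep σ : Matrix (Fin 2) (Fin 2) ℤ) *ᵥ triangleVec k = triangleVec (σ k) := by
  revert σ k; decide

theorem triangleVec_injective : Function.Injective triangleVec := by decide

theorem permRep_injective : Function.Injective permRep := fun σ τ h =>
  Equiv.ext fun k => triangleVec_injective <| by
    rw [← permRep_mulVec_triangleVec, h, permRep_mulVec_triangleVec]

theorem permRep_ne_neg_one (σ : Equiv.Perm (Fin 3)) : permRep σ ≠ -1 := by
  intro h
  have hσ := permRep_mulVec_triangleVec σ 0
  rw [h, Units.val_neg, Units.val_one, Matrix.neg_mulVec, Matrix.one_mulVec] at hσ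
  have h_neg : ∀ k, triangleVec k ≠ -triangleVec 0 := by decide
  exact h_neg (σ 0) hσ.symm

theorem disjoint_range_signHom_range_permRep :
    Disjoint (ZModTwo.signHom (Matrix (Fin 2) (Fin 2) ℤ)).range permRep.range := by
  rw [Subgroup.disjoint_def]
  rintro _ ⟨a, rfl⟩ ⟨σ, hσ⟩
  rcases ZModTwo.eq_one_or_eq_ofAdd_one a with rfl | rfl
  · exact map_one _
  · rw [ZModTwo.signHom_ofAdd_one] at hσ
    exact absurd hσ (permRep_ne_neg_one σ)

theorem setOf_isSwap_fin_three :
    {σ : Equiv.Perm (Fin 3) | σ.IsSwap} = {Equiv.swap 0 1, Equiv.swap 1 2, Equiv.swap 0 2} := by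
  ext σ
  simp only [Equiv.Perm.IsSwap, Set.mem_ofPred_eq, Set.mem_insert_iff, Set.mem_singleton_iff]
  revert σ; decide

theorem permRep_swap_zero_one : permRep (Equiv.swap 0 1) = S₁ := by decide

theorem permRep_swap_one_two : permRep (Equiv.swap 1 2) = S₂ := by decide

theorem permRep_swap_zero_two : permRep (Equiv.swap 0 2) = S₃ := by decide

theorem range_permRep : permRep.range = Subgroup.closure {S₁, S₂, S₃} := by
  rw [permRep.range_eq_closure_image (setOf_isSwap_fin_three ▸ Equiv.Perm.closure_isSwap),
    Set.image_insert_eq, Set.image_insert_eq, Set.image_singleton, permRep_swap_zero_one,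
    permRep_swap_one_two, permRep_swap_zero_two]

/-- The subgroup of `GL₂(ℤ)` generated by `-I, S₁, S₂, S₃` is isomorphic to
`(ℤ/2ℤ) × 𝔖₃`: there is an injective group homomorphism
`(ℤ/2ℤ) × 𝔖₃ → GL₂(ℤ)` sending the generator of `ℤ/2ℤ` to `-I` and the
transpositions `(0 1)`, `(1 2)`, `(0 2)` to `S₁`, `S₂`, `S₃`, whose image is
exactly the subgroup generated by `{-I, S₁, S₂, S₃}`. -/
theorem stabilizer_subgroup_iso :
    ∃ φ : Multiplicative (ZMod 2) × Equiv.Perm (Fin 3) →* GL (Fin 2) ℤ,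
      Function.Injective φ ∧
      φ (Multiplicative.ofAdd (1 : ZMod 2), 1) = -1 ∧
      φ (1, Equiv.swap 0 1) = S₁ ∧
      φ (1, Equiv.swap 1 2) = S₂ ∧
      φ (1, Equiv.swap 0 2) = S₃ ∧
      φ.range = Subgroup.closure {(-1 : GL (Fin 2) ℤ), S₁, S₂, S₃} := by
  refine ⟨(ZModTwo.signHom _).noncommCoprod permRep (fun a σ => ZModTwo.commute_signHom _ a _),
    ?_, ?_, ?_, ?_, ?_, ?_⟩
  · exact (MonoidHom.noncommCoprod_injective _ _ _).2
      ⟨ZModTwo.signHom_injective _ (by decide), permRep_injective,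
        disjoint_range_signHom_range_permRep⟩
  · simp
  · simp [permRep_swap_zero_one]
  · simp [permRep_swap_one_two]
  · simp [permRep_swap_zero_two]
  · rw [MonoidHom.noncommCoprod_range, ZModTwo.range_signHom, range_permRep,
      ← Subgroup.closure_union, Set.singleton_union]
end

section
/- For every integer n, the matrix A = [[n,−1],[1,0]] ∈ GL₂(ℤ) satisfies ‖A‖ ≤ |n+1|. -/
/-- The matrix `[[n,-1],[1,0]]` as an element of `GL₂(ℤ)`. -/
def specialMat (n : ℤ) : GL (Fin 2) ℤ :=
  ⟨!![n, -1; 1, 0], !![0, 1; -1, n],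
    by ext i j; fin_cases i <;> fin_cases j <;>
      simp [Matrix.mul_apply, Fin.sum_univ_two],
    by ext i j; fin_cases i <;> fin_cases j <;>
      simp [Matrix.mul_apply, Fin.sum_univ_two]⟩

/-!
Since `J·S₂ = [[1,0],[-1,1]]`, the powers `(J·S₂)^N = [[1,0],[-N,1]]` are unipotent, and an explicit
conjugation turns `A = [[n,-1],[1,0]]` into `S₂·(J·S₂)^(n+1)·S₁` when `n ≥ -1` and into
`S₃·(J·S₂)^(-(n+1))·S₁` when `n ≤ -1`. Both are normal forms with `|n+1|` factors `J`.
-/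

lemma val_Jmat_mul_S₂_pow (N : ℕ) :
    (((Jmat * S₂) ^ N : GL (Fin 2) ℤ) : Matrix (Fin 2) (Fin 2) ℤ) = !![1, 0; -(N : ℤ), 1] := by
  induction N with
  | zero => simp [Matrix.one_fin_two]
  | succ N ih =>
    rw [pow_succ, Units.val_mul, ih, Units.val_mul]
    simp only [Jmat, S₂, Matrix.mul_fin_two]
    push_cast
    ring_nf

lemma wordProd_eq_of_tail_eq_two {i : ℕ → ℕ} (hi : ∀ k, 0 < k → i k = 2) (N : ℕ) :
    wordProd i N = SS (i 0) * (Jmat * S₂) ^ N := by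
  induction N with
  | zero => simp [wordProd]
  | succ N ih =>
    rw [wordProd, ih, hi (N + 1) N.succ_pos, pow_succ]
    simp only [SS, mul_assoc]

lemma matNorm_SS_mul_pow_mul_S₁_le {a : ℕ} (ha : a = 1 ∨ a = 2 ∨ a = 3) (N : ℕ) :
    matNorm (SS a * (Jmat * S₂) ^ N * S₁) ≤ N := by
  let i : ℕ → ℕ := fun k => if k = 0 then a else 2
  have hi0 : i 0 = a := if_pos rfl
  have hi : ∀ k, 0 < k → i k = 2 := fun k hk => if_neg hk.ne'
  refine Nat.sInf_le ⟨1, i, 1, .inl rfl, by omega, ?_, fun k hk _ => .inr (hi k hk), le_rfl, ?_⟩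
  · rcases N.eq_zero_or_pos with rfl | hN
    · omega
    · exact .inr (.inl (hi N hN))
  · rw [one_mul, pow_one, wordProd_eq_of_tail_eq_two hi, hi0]

lemma matNormConj_le_matNorm_conj (A B : GL (Fin 2) ℤ) :
    matNormConj A ≤ matNorm (B * A * B⁻¹) :=
  Nat.sInf_le ⟨B, rfl⟩

def conjugatorPos : GL (Fin 2) ℤ := ⟨!![0, -1; -1, -1], !![1, -1; -1, 0], by decide, by decide⟩

def conjugatorNeg : GL (Fin 2) ℤ := ⟨!![-1, -1; 0, -1], !![-1, 1; 0, -1], by decide, by decide⟩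

lemma conjugatorPos_mul_specialMat_mul_inv (N : ℕ) :
    conjugatorPos * specialMat (N - 1) * conjugatorPos⁻¹ = S₂ * (Jmat * S₂) ^ N * S₁ := by
  ext : 1
  simp only [Units.val_mul, val_Jmat_mul_S₂_pow]
  simp only [conjugatorPos, specialMat, S₁, S₂, Units.inv_mk, Matrix.mul_fin_two]
  ring_nf

lemma conjugatorNeg_mul_specialMat_mul_inv (N : ℕ) :
    conjugatorNeg * specialMat (-N - 1) * conjugatorNeg⁻¹ = S₃ * (Jmat * S₂) ^ N * S₁ := by
  ext : 1
  simp only [Units.val_mul, val_Jmat_mul_S₂_pow]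
  simp only [conjugatorNeg, specialMat, S₁, S₃, Units.inv_mk, Matrix.mul_fin_two]
  ring_nf

/-- For every integer `n`, the matrix `[[n,-1],[1,0]]` satisfies `‖A‖ ≤ |n+1|`. -/
theorem matNormConj_specialMat_le (n : ℤ) :
    matNormConj (specialMat n) ≤ (n + 1).natAbs := by
  generalize hN : (n + 1).natAbs = N
  rcases Int.natAbs_eq (n + 1) with h | h <;> rw [hN] at h
  · obtain rfl : n = N - 1 := by omega
    refine (matNormConj_le_matNorm_conj _ conjugatorPos).trans ?_
    rw [conjugatorPos_mul_specialMat_mul_inv]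
    exact matNorm_SS_mul_pow_mul_S₁_le (a := 2) (by omega) N
  · obtain rfl : n = -N - 1 := by omega
    refine (matNormConj_le_matNorm_conj _ conjugatorNeg).trans ?_
    rw [conjugatorNeg_mul_specialMat_mul_inv]
    exact matNorm_SS_mul_pow_mul_S₁_le (a := 3) (by omega) N
end
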